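/- Fix reals α∈(0,1), θ>0, λ>0 with √(λθ)<1, and an integer J≥1, and assume 1−α^{J−1}·(1−√(λθ)) < v_th∞(λ) < 1−α^{J}·(1−√(λθ)). Then the time-averaged posterior variance of the deterministic myopic recursion converges: lim_{T→∞} (1/(T+1))·Σ_{k=0}^{T} V̂_k = 1 − (1−α^{J})·(1−√(λθ)) / (J·(1−α)). -/
import Mathlib


/-- The `S_A = ∞` threshold `v_th∞(λ)`. -/
noncomputable def vthinf (th lam : ℝ) : ℝ :=
  Real.sqrt (lam * th) + lam / 2 +
    Real.sqrt lam * Real.sqrt (Real.sqrt (lam * th) + lam / 4)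

/-- Partial sums of a `J`-periodic sequence. -/
lemma sum_range_mod (J : ℕ) (hJ : 0 < J) (g : ℕ → ℝ) (n : ℕ) :
    ∑ k ∈ Finset.range n, g (k % J) =
      ((n / J : ℕ) : ℝ) * ∑ r ∈ Finset.range J, g r +
        ∑ r ∈ Finset.range (n % J), g r := by
  induction n with
  | zero => simp
  | succ n ih =>
    rw [Finset.sum_range_succ, ih]
    have hle1 : n % J + 1 ≤ J := Nat.mod_lt n hJ
    rcases eq_or_lt_of_le hle1 with heq | hlt
    · have hd := Nat.div_add_mod n J
      have h1 : n + 1 = J * (n / J + 1) := by rw [Nat.mul_add, Nat.mul_one]; omega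
      have hdiv : (n + 1) / J = n / J + 1 := by rw [h1, Nat.mul_div_cancel_left _ hJ]
      have hmod : (n + 1) % J = 0 := by rw [h1, Nat.mul_mod_right]
      rw [hdiv, hmod, add_assoc, ← Finset.sum_range_succ, heq]
      simp only [Finset.range_zero, Finset.sum_empty]
      push_cast
      ring
    · have hd := Nat.div_add_mod n J
      have h1 : n + 1 = (n % J + 1) + J * (n / J) := by omega
      have hmod : (n + 1) % J = n % J + 1 := by
        rw [h1, Nat.add_mul_mod_self_left, Nat.mod_eq_of_lt hlt]
      have hdiv : (n + 1) / J = n / J := by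
        rw [h1, Nat.add_mul_div_left _ _ hJ, Nat.div_eq_of_lt hlt]; omega
      rw [hdiv, hmod, Finset.sum_range_succ]
      ring

/-- Cesàro averages of a `J`-periodic sequence converge to the period mean. -/
lemma tendsto_avg_mod (J : ℕ) (hJ : 0 < J) (g : ℕ → ℝ) :
    Filter.Tendsto (fun n : ℕ => (∑ k ∈ Finset.range n, g (k % J)) / n)
      Filter.atTop (nhds ((∑ r ∈ Finset.range J, g r) / J)) := by
  set B := ∑ r ∈ Finset.range J, g r with hB
  set C := ∑ r ∈ Finset.range J, |g r| with hC
  have hCB : |B| ≤ C := Finset.abs_sum_le_sum_abs _ _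
  have hC0 : 0 ≤ C := Finset.sum_nonneg fun _ _ => abs_nonneg _
  have hJR : (0 : ℝ) < J := by exact_mod_cast hJ
  have hJne : (J : ℝ) ≠ 0 := ne_of_gt hJR
  have hdiff : ∀ n : ℕ, 1 ≤ n →
      |(∑ k ∈ Finset.range n, g (k % J)) / n - B / J| ≤ 2 * C / n := by
    intro n hn
    have hn0 : (0 : ℝ) < n := by exact_mod_cast hn
    have hnne : (n : ℝ) ≠ 0 := ne_of_gt hn0
    set R := ∑ r ∈ Finset.range (n % J), g r with hR
    have hRle : |R| ≤ C := by
      calc |R| ≤ ∑ r ∈ Finset.range (n % J), |g r| := Finset.abs_sum_le_sum_abs _ _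
        _ ≤ C := Finset.sum_le_sum_of_subset_of_nonneg
              (Finset.range_subset_range.2 (Nat.mod_lt n hJ).le)
              (fun _ _ _ => abs_nonneg _)
    have hm : ((n % J : ℕ) : ℝ) ≤ (J : ℝ) := by
      exact_mod_cast (Nat.mod_lt n hJ).le
    have hm0 : (0 : ℝ) ≤ ((n % J : ℕ) : ℝ) := by positivity
    have hcast : ((n / J : ℕ) : ℝ) * J = (n : ℝ) - ((n % J : ℕ) : ℝ) := by
      have h := Nat.div_add_mod n J
      have h2 : ((J * (n / J) + n % J : ℕ) : ℝ) = (n : ℝ) := by rw [h]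
      push_cast at h2
      linarith
    rw [sum_range_mod J hJ g n]
    have ha : ((n / J : ℕ) : ℝ) = ((n : ℝ) - ((n % J : ℕ) : ℝ)) / J :=
      eq_div_of_mul_eq hJne hcast
    have key : (((n / J : ℕ) : ℝ) * B + R) / n - B / J
        = (R - ((n % J : ℕ) : ℝ) * (B / J)) / n := by
      rw [ha]; field_simp; ring
    rw [key, abs_div, abs_of_pos hn0]
    gcongr
    calc |R - ((n % J : ℕ) : ℝ) * (B / J)|
          = |R + -(((n % J : ℕ) : ℝ) * (B / J))| := by rw [sub_eq_add_neg]
        _ ≤ |R| + |(-(((n % J : ℕ) : ℝ) * (B / J)))| := abs_add_le _ _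
        _ = |R| + |((n % J : ℕ) : ℝ) * (B / J)| := by rw [abs_neg]
        _ ≤ C + C := by
            refine add_le_add hRle ?_
            rw [abs_mul, abs_of_nonneg hm0, abs_div, abs_of_pos hJR]
            calc ((n % J : ℕ) : ℝ) * (|B| / J) ≤ (J : ℝ) * (|B| / J) := by
                  apply mul_le_mul_of_nonneg_right hm
                  positivity
              _ = |B| := by field_simp
              _ ≤ C := hCB
        _ = 2 * C := by ring
  have h0 : Filter.Tendsto (fun n : ℕ => 2 * C / n) Filter.atTop (nhds 0) :=
    tendsto_const_div_atTop_nhds_zero_nat _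
  have hz : Filter.Tendsto
      (fun n : ℕ => (∑ k ∈ Finset.range n, g (k % J)) / n - B / J)
      Filter.atTop (nhds 0) := by
    apply squeeze_zero_norm' _ h0
    filter_upwards [Filter.eventually_ge_atTop 1] with n hn
    simpa [Real.norm_eq_abs] using hdiff n hn
  have := hz.add_const (B / J)
  simpa using this

/-- under the stated threshold condition, the time-averaged
posterior variance of the deterministic myopic recursion converges to
`1 − (1−α^J)·(1−√(λθ))/(J·(1−α))`. -/
theorem stmt_7 (alpha th lam : ℝ) (halpha : alpha ∈ Set.Ioo (0 : ℝ) 1)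
    (hth : 0 < th) (hlam : 0 < lam) (hsq : Real.sqrt (lam * th) < 1)
    (J : ℕ) (hJ : 1 ≤ J)
    (hlow : 1 - alpha ^ (J - 1) * (1 - Real.sqrt (lam * th)) < vthinf th lam)
    (hhigh : vthinf th lam < 1 - alpha ^ J * (1 - Real.sqrt (lam * th)))
    (V Vhat : ℕ → ℝ) (hV0 : V 0 = 1)
    (hVhat : ∀ k : ℕ, Vhat k =
      if vthinf th lam < V k then Real.sqrt (lam * th) else V k)
    (hrec : ∀ k : ℕ, V (k + 1) = 1 - alpha * (1 - Vhat k)) :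
    Filter.Tendsto
      (fun T : ℕ => (1 / ((T : ℝ) + 1)) * ∑ k ∈ Finset.range (T + 1), Vhat k)
      Filter.atTop
      (nhds (1 - (1 - alpha ^ J) * (1 - Real.sqrt (lam * th)) / ((J : ℝ) * (1 - alpha)))) := by
  obtain ⟨ha0, ha1⟩ := halpha
  set s := Real.sqrt (lam * th) with hs
  have hs0 : 0 ≤ s := Real.sqrt_nonneg _
  have h1s : 0 < 1 - s := by linarith
  have hJ0 : 0 < J := hJ
  -- the key periodic description
  have main : ∀ k : ℕ, Vhat k = 1 - (1 - s) * alpha ^ (k % J) ∧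
      V (k + 1) = 1 - alpha ^ (k % J + 1) * (1 - s) := by
    intro k
    induction k with
    | zero =>
      have hpow : 0 < alpha ^ J * (1 - s) := by positivity
      have hgt : vthinf th lam < V 0 := by rw [hV0]; linarith
      have hm0 : 0 % J = 0 := Nat.zero_mod J
      constructor
      · rw [hVhat 0, if_pos hgt, hm0, pow_zero]; try ring
      · rw [hrec 0, hVhat 0, if_pos hgt, hm0, pow_one]; try ring
    | succ k ih =>
      obtain ⟨ih1, ih2⟩ := ih
      have hle1 : k % J + 1 ≤ J := Nat.mod_lt k hJ0
      rcases eq_or_lt_of_le hle1 with heq | hlt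
      · -- reset step: k % J + 1 = J
        have hd := Nat.div_add_mod k J
        have h1 : k + 1 = J * (k / J + 1) := by rw [Nat.mul_add, Nat.mul_one]; omega
        have hmod0 : (k + 1) % J = 0 := by rw [h1, Nat.mul_mod_right]
        have hgt : vthinf th lam < V (k + 1) := by rw [ih2, heq]; exact hhigh
        constructor
        · rw [hVhat (k + 1), if_pos hgt, hmod0, pow_zero]; try ring
        · rw [hrec (k + 1), hVhat (k + 1), if_pos hgt, hmod0, pow_one]; try ring
      · -- descent step: k % J + 1 < J
        have hd := Nat.div_add_mod k J
        have h1 : k + 1 = (k % J + 1) + J * (k / J) := by omega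
        have hmodsucc : (k + 1) % J = k % J + 1 := by
          rw [h1, Nat.add_mul_mod_self_left, Nat.mod_eq_of_lt hlt]
        have hple : alpha ^ (J - 1) ≤ alpha ^ (k % J + 1) :=
          pow_le_pow_of_le_one ha0.le ha1.le (by omega)
        have hmul : alpha ^ (J - 1) * (1 - s) ≤ alpha ^ (k % J + 1) * (1 - s) :=
          mul_le_mul_of_nonneg_right hple h1s.le
        have hle : ¬ (vthinf th lam < V (k + 1)) := by
          push_neg
          rw [ih2]
          linarith
        constructor
        · rw [hVhat (k + 1), if_neg hle, ih2, hmodsucc]; try ring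
        · rw [hrec (k + 1), hVhat (k + 1), if_neg hle, ih2, hmodsucc]; try ring
  -- apply the Cesàro lemma with g r = 1 - (1-s) * alpha ^ r
  set g : ℕ → ℝ := fun r => 1 - (1 - s) * alpha ^ r with hg
  have hJR : (0 : ℝ) < J := by exact_mod_cast hJ0
  have hval : (∑ r ∈ Finset.range J, g r) / J
      = 1 - (1 - alpha ^ J) * (1 - s) / ((J : ℝ) * (1 - alpha)) := by
    have hgeom : ∑ r ∈ Finset.range J, alpha ^ r = (alpha ^ J - 1) / (alpha - 1) :=
      geom_sum_eq (ne_of_lt ha1) J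
    have hsum : ∑ r ∈ Finset.range J, g r
        = (J : ℝ) - (1 - s) * ((alpha ^ J - 1) / (alpha - 1)) := by
      simp only [hg, Finset.sum_sub_distrib, Finset.sum_const, Finset.card_range,
        nsmul_eq_mul, mul_one, ← Finset.mul_sum, hgeom]
    rw [hsum]
    have hane : alpha - 1 ≠ 0 := by linarith
    have hane' : (1 : ℝ) - alpha ≠ 0 := by linarith
    field_simp
    ring
  have htend := (tendsto_avg_mod J hJ0 g).comp (Filter.tendsto_add_atTop_nat 1)
  rw [← hval]
  apply htend.congr
  intro T
  have hsVhat : ∑ k ∈ Finset.range (T + 1), g (k % J)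
      = ∑ k ∈ Finset.range (T + 1), Vhat k :=
    Finset.sum_congr rfl (fun k _ => ((main k).1).symm)
  simp only [Function.comp_apply, hsVhat]
  push_cast
  ring
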